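/- Let h : (0,∞) → [0,∞) be C¹ and satisfy, for some α > 0 and w > 0, the equation w x^{1+α} h'(x) + w(α+2) x^α h(x) + (h*h)(x) - 2 M₀(h) h(x) = 0 for all x > 0, together with the decay x^{1+α}h(x) → 0 as x → ∞ and integrability of h, x^α h, and h*h on (0,∞). Then H(x) := ∫_x^∞ h satisfies w x^{1+α} H'(x) + w x^α H(x) + αw ∫_x^∞ x_*^{α-1} H(x_*) dx_* + (h*H)(x) - M₀(h) H(x) = 0 for all x > 0, provided additionally x^α H(x) → 0 as x → ∞. -/

import Mathlib

open MeasureTheory Set Filter Real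
open scoped Topology

theorem tail_equation_from_h_equation
    (α w : ℝ) (hα : 0 < α) (hw : 0 < w)
    (h h' : ℝ → ℝ)
    (hderiv : ∀ x ∈ Ioi (0:ℝ), HasDerivAt h (h' x) x)
    (hderiv_cont : ContinuousOn h' (Ioi 0))
    (hnonneg : ∀ x ∈ Ioi (0:ℝ), 0 ≤ h x)
    (heq : ∀ x ∈ Ioi (0:ℝ),
      w * x ^ (1 + α) * h' x + w * (α + 2) * x ^ α * h x
        + (∫ y in Ioo (0:ℝ) x, h y * h (x - y))
        - 2 * (∫ y in Ioi (0:ℝ), h y) * h x = 0)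
    (hdecay : Tendsto (fun x => x ^ (1 + α) * h x) atTop (𝓝 0))
    (hint : IntegrableOn h (Ioi 0))
    (hint' : IntegrableOn (fun x => x ^ α * h x) (Ioi 0))
    (hconvint : IntegrableOn (fun x => ∫ y in Ioo (0:ℝ) x, h y * h (x - y)) (Ioi 0))
    (H : ℝ → ℝ) (hH : ∀ x, H x = ∫ y in Ioi x, h y)
    (hHdecay : Tendsto (fun x => x ^ α * H x) atTop (𝓝 0)) :
    ∀ x ∈ Ioi (0:ℝ),
      w * x ^ (1 + α) * (-(h x)) + w * x ^ α * H x
        + α * w * (∫ y in Ioi x, y ^ (α - 1) * H y)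
        + (∫ y in Ioo (0:ℝ) x, h y * H (x - y))
        - (∫ y in Ioi (0:ℝ), h y) * H x = 0 := by
  -- notation
  set M : ℝ := ∫ y in Ioi (0:ℝ), h y with hMdef
  -- continuity of h on (0,∞)
  have hcontOn : ContinuousOn h (Ioi 0) := fun y hy =>
    (hderiv y hy).continuousAt.continuousWithinAt
  -- H has derivative -(h y) at every y > 0
  have hHderiv : ∀ y ∈ Ioi (0:ℝ), HasDerivAt H (-(h y)) y := by
    intro y hy
    have hy0 : (0:ℝ) < y := hy
    set a : ℝ := y / 2 with ha_def
    have ha0 : (0:ℝ) < a := by positivity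
    have hay : a < y := by
      simp only [ha_def]
      linarith
    have hIcc : ∀ z : ℝ, a ≤ z → Icc a z ⊆ Ioi (0:ℝ) := by
      intro z hz t ht
      exact lt_of_lt_of_le ha0 ht.1
    have intInt : IntervalIntegrable h volume a y := by
      apply MeasureTheory.IntegrableOn.intervalIntegrable
      apply hint.mono_set
      rw [uIcc_of_le hay.le]
      exact hIcc y hay.le
    have h1 : HasDerivAt (fun z => ∫ t in a..z, h t) (h y) y :=
      intervalIntegral.integral_hasDerivAt_right intInt
        (ContinuousOn.stronglyMeasurableAtFilter isOpen_Ioi hcontOn y hy)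
        (hcontOn.continuousAt (Ioi_mem_nhds hy0))
    have h2 : HasDerivAt (fun z => H a - ∫ t in a..z, h t) (-(h y)) y :=
      h1.const_sub (H a)
    apply h2.congr_of_eventuallyEq
    filter_upwards [Ioi_mem_nhds hay] with z hz
    have haz : a < z := hz
    have hz0 : (0:ℝ) < z := lt_trans ha0 haz
    have hsplit : H a = (∫ t in Ioc a z, h t) + H z := by
      rw [hH a, hH z, ← Ioc_union_Ioi_eq_Ioi haz.le,
        setIntegral_union (Ioc_disjoint_Ioi le_rfl) measurableSet_Ioi
          (hint.mono_set (fun t ht => lt_of_lt_of_le ha0 ht.1.le))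
          (hint.mono_set (fun t ht => lt_trans hz0 ht))]
    rw [intervalIntegral.integral_of_le haz.le]
    linarith [hsplit]
  have hHcont : ContinuousOn H (Ioi 0) := fun y hy =>
    (hHderiv y hy).continuousAt.continuousWithinAt
  -- H is nonnegative and bounded by M on [0,∞)
  have hHnonneg : ∀ y : ℝ, 0 ≤ y → 0 ≤ H y := by
    intro y hy
    rw [hH y]
    apply setIntegral_nonneg measurableSet_Ioi
    intro t ht
    exact hnonneg t (lt_of_le_of_lt hy ht)
  have hHle : ∀ y : ℝ, 0 ≤ y → H y ≤ M := by
    intro y hy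
    rw [hH y, hMdef]
    apply setIntegral_mono_set hint
    · exact (ae_restrict_iff' measurableSet_Ioi).2 (Eventually.of_forall hnonneg)
    · exact HasSubset.Subset.eventuallyLE (Ioi_subset_Ioi hy)
  -- the measurable extension of h by 0
  set f : ℝ → ℝ := (Ioi (0:ℝ)).indicator h with hf_def
  have hfmeas : Measurable f := by
    rw [hf_def, ← Set.piecewise_eq_indicator]
    exact ContinuousOn.measurable_piecewise hcontOn continuousOn_const measurableSet_Ioi
  have hf_nonneg : ∀ s : ℝ, 0 ≤ f s := by
    intro s
    rw [hf_def]
    by_cases hs : s ∈ Ioi (0:ℝ)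
    · rw [indicator_of_mem hs]; exact hnonneg s hs
    · rw [indicator_of_notMem hs]
  have hf_int : Integrable f := (integrable_indicator_iff measurableSet_Ioi).2 hint
  have hf_eq : ∀ s : ℝ, 0 < s → f s = h s := fun s hs => indicator_of_mem hs h
  have hf_eq0 : ∀ s : ℝ, s ≤ 0 → f s = 0 := fun s hs =>
    indicator_of_notMem (by simpa using hs) h
  -- tail integral of f
  set Gr : ℝ → ℝ := fun t => ∫ u in Ioi t, f u with hGr_def
  have hGr_eqH : ∀ t : ℝ, 0 ≤ t → Gr t = H t := by
    intro t ht
    simp only [hGr_def, hH t]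
    rw [setIntegral_indicator measurableSet_Ioi,
      inter_eq_self_of_subset_left (Ioi_subset_Ioi ht)]
  have hGr_eqM : ∀ t : ℝ, t ≤ 0 → Gr t = M := by
    intro t ht
    simp only [hGr_def, hMdef]
    rw [setIntegral_indicator measurableSet_Ioi]
    congr 1
    rw [inter_eq_self_of_subset_right (Ioi_subset_Ioi ht)]
  have hGr_nonneg : ∀ t : ℝ, 0 ≤ Gr t :=
    fun t => setIntegral_nonneg measurableSet_Ioi (fun u _ => hf_nonneg u)
  have hGr_le : ∀ t : ℝ, Gr t ≤ M := by
    intro t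
    rcases le_or_gt t 0 with ht | ht
    · exact le_of_eq (hGr_eqM t ht)
    · rw [hGr_eqH t ht.le]; exact hHle t ht.le
  have hGr_anti : Antitone Gr := by
    intro s t hst
    apply setIntegral_mono_set (hf_int.integrableOn)
    · exact Eventually.of_forall (fun u => hf_nonneg u)
    · exact HasSubset.Subset.eventuallyLE (Ioi_subset_Ioi hst)
  have hGr_meas : Measurable Gr := hGr_anti.measurable
  -- slice integrability of the convolution integrand
  have hslice : ∀ y : ℝ, 0 < y →
      IntegrableOn (fun s => h s * h (y - s)) (Ioo 0 y) := by
    intro y hy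
    have hy2 : (0:ℝ) < y / 2 := by linarith
    obtain ⟨C, hC⟩ := (isCompact_Icc (a := y / 2) (b := y)).exists_bound_of_continuousOn
      (hcontOn.mono (fun t ht => lt_of_lt_of_le hy2 ht.1))
    have hC0 : 0 ≤ C := le_trans (norm_nonneg _) (hC y (by constructor <;> linarith))
    have hmc : ContinuousOn (fun s => h s * h (y - s)) (Ioo 0 y) := by
      apply ContinuousOn.mul
      · exact hcontOn.mono (fun t ht => ht.1)
      · apply hcontOn.comp ((continuous_const.sub continuous_id).continuousOn)
        intro t ht
        simp only [mem_Ioi, id_eq, Pi.sub_apply]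
        linarith [ht.2]
    have hpart1 : IntegrableOn (fun s => h s * h (y - s)) (Ioc 0 (y/2)) := by
      apply Integrable.mono' ((hint.mono_set (fun t ht => ht.1)).const_mul C)
      · exact (hmc.mono (fun t ht => ⟨ht.1, lt_of_le_of_lt ht.2 (by linarith)⟩)).aestronglyMeasurable
          measurableSet_Ioc
      · apply (ae_restrict_iff' measurableSet_Ioc).2
        apply Eventually.of_forall
        intro s hs
        have h1 : 0 ≤ h s := hnonneg s hs.1
        have h2 : |h (y - s)| ≤ C := by
          have := hC (y - s) ⟨by linarith [hs.2], by linarith [hs.1]⟩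
          simpa using this
        calc ‖h s * h (y - s)‖ = h s * |h (y - s)| := by
              rw [norm_mul, Real.norm_eq_abs, Real.norm_eq_abs, abs_of_nonneg h1]
        _ ≤ h s * C := by exact mul_le_mul_of_nonneg_left h2 h1
        _ = C * h s := mul_comm _ _
    have hpart2 : IntegrableOn (fun s => h s * h (y - s)) (Ioo (y/2) y) := by
      have hcomp : Integrable (fun s => f (y - s)) := by
        exact (integrable_comp_sub_left f y).2 hf_int
      apply Integrable.mono' ((hcomp.const_mul C).integrableOn)
      · exact (hmc.mono (fun t ht => ⟨lt_trans hy2 ht.1, ht.2⟩)).aestronglyMeasurable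
          measurableSet_Ioo
      · apply (ae_restrict_iff' measurableSet_Ioo).2
        apply Eventually.of_forall
        intro s hs
        have hys : 0 < y - s := by linarith [hs.2]
        have h1 : 0 ≤ h (y - s) := hnonneg _ hys
        have h2 : |h s| ≤ C := hC s ⟨hs.1.le, hs.2.le⟩
        rw [hf_eq _ hys]
        calc ‖h s * h (y - s)‖ = |h s| * h (y - s) := by
              rw [norm_mul, Real.norm_eq_abs, Real.norm_eq_abs, abs_of_nonneg h1]
        _ ≤ C * h (y - s) := mul_le_mul_of_nonneg_right h2 h1
    have : Ioc 0 (y/2) ∪ Ioo (y/2) y = Ioo 0 y := Ioc_union_Ioo_eq_Ioo hy2.le (by linarith)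
    rw [← this]
    exact hpart1.union hpart2
  -- main part
  intro x hx
  have hx0 : (0:ℝ) < x := hx
  -- integrability on (x,∞)
  have hIsub : Ioi x ⊆ Ioi (0:ℝ) := Ioi_subset_Ioi hx0.le
  have Ih : IntegrableOn h (Ioi x) := hint.mono_set hIsub
  have I2 : IntegrableOn (fun y => y ^ α * h y) (Ioi x) := hint'.mono_set hIsub
  have Iconv : IntegrableOn (fun y => ∫ s in Ioo (0:ℝ) y, h s * h (y - s)) (Ioi x) :=
    hconvint.mono_set hIsub
  have I1 : IntegrableOn (fun y => y ^ (1 + α) * h' y) (Ioi x) := by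
    have hg : IntegrableOn
        (fun y => (-(α+2)) * (y ^ α * h y) + (-(1/w)) * (∫ s in Ioo (0:ℝ) y, h s * h (y - s))
          + (2*M/w) * h y) (Ioi x) :=
      ((I2.const_mul _).add (Iconv.const_mul _)).add (Ih.const_mul _)
    apply hg.congr_fun _ measurableSet_Ioi
    intro y hy
    have e := heq y (hIsub hy)
    have hwne : w ≠ 0 := hw.ne'
    field_simp
    linarith [e]
  -- Step B : integration by parts for x^{1+α} h
  have hB : ∫ y in Ioi x, ((1+α) * (y ^ α * h y) + y ^ (1+α) * h' y)
      = 0 - x ^ (1+α) * h x := by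
    apply integral_Ioi_of_hasDerivAt_of_tendsto' _ ((I2.const_mul _).add I1) hdecay
    intro y hy
    have hy0 : (0:ℝ) < y := lt_of_lt_of_le hx0 hy
    have d1 : HasDerivAt (fun y : ℝ => y ^ (1+α)) ((1+α) * y ^ α) y := by
      have h0 := Real.hasDerivAt_rpow_const (x := y) (p := 1+α) (Or.inl hy0.ne')
      rwa [add_sub_cancel_left] at h0
    have d2 := d1.mul (hderiv y hy0)
    show HasDerivAt (fun y : ℝ => y ^ (1+α) * h y)
      ((1+α) * (y ^ α * h y) + y ^ (1+α) * h' y) y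
    have e : (1+α) * (y ^ α * h y) + y ^ (1+α) * h' y
        = (1+α) * y ^ α * h y + y ^ (1+α) * h' y := by ring
    rw [e]
    exact d2
  -- Step C : integration by parts for x^α H
  set J : ℝ := ∫ y in Ioi x, y ^ α * h y with hJ_def
  have hPd : ∀ y ∈ Ici x, HasDerivAt
      (fun y => y ^ α * H y + ∫ t in x..y, t ^ α * h t) (α * (y ^ (α-1) * H y)) y := by
    intro y hy
    have hy0 : (0:ℝ) < y := lt_of_lt_of_le hx0 hy
    have d1 : HasDerivAt (fun y : ℝ => y ^ α) (α * y ^ (α-1)) y :=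
      Real.hasDerivAt_rpow_const (Or.inl hy0.ne')
    have d2 := d1.mul (hHderiv y hy0)
    have cont : ContinuousOn (fun t : ℝ => t ^ α * h t) (Ioi 0) := by
      apply ContinuousOn.mul _ hcontOn
      intro t ht
      exact (Real.continuousAt_rpow_const t α (Or.inl ht.out.ne')).continuousWithinAt
    have d3 : HasDerivAt (fun y => ∫ t in x..y, t ^ α * h t) (y ^ α * h y) y := by
      apply intervalIntegral.integral_hasDerivAt_right
      · apply MeasureTheory.IntegrableOn.intervalIntegrable
        apply hint'.mono_set
        rw [uIcc_of_le hy]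
        exact fun t ht => lt_of_lt_of_le hx0 ht.1
      · exact ContinuousOn.stronglyMeasurableAtFilter isOpen_Ioi cont y hy0
      · exact cont.continuousAt (Ioi_mem_nhds hy0)
    show HasDerivAt (fun y => y ^ α * H y + ∫ t in x..y, t ^ α * h t)
      (α * (y ^ (α-1) * H y)) y
    have e2 : α * (y ^ (α-1) * H y)
        = (α * y ^ (α-1) * H y + y ^ α * -h y) + y ^ α * h y := by ring
    rw [e2]
    exact d2.add d3
  have hPtend : Tendsto (fun y => y ^ α * H y + ∫ t in x..y, t ^ α * h t) atTop
      (𝓝 (0 + J)) := by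
    apply Tendsto.add hHdecay
    exact intervalIntegral_tendsto_integral_Ioi x I2 tendsto_id
  have hPpos : ∀ y ∈ Ioi x, 0 ≤ α * (y ^ (α-1) * H y) := by
    intro y hy
    have hy0 : (0:ℝ) < y := lt_of_lt_of_le hx0 hy.le
    have h1 : (0:ℝ) ≤ y ^ (α-1) := (Real.rpow_pos_of_pos hy0 _).le
    exact mul_nonneg hα.le (mul_nonneg h1 (hHnonneg y hy0.le))
  have IC_int : IntegrableOn (fun y => α * (y ^ (α-1) * H y)) (Ioi x) :=
    integrableOn_Ioi_deriv_of_nonneg' hPd hPpos hPtend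
  have IC_eq : ∫ y in Ioi x, α * (y ^ (α-1) * H y) = J - x ^ α * H x := by
    have := integral_Ioi_of_hasDerivAt_of_nonneg' hPd hPpos hPtend
    rw [this, intervalIntegral.integral_same]
    ring
  -- Step D : Fubini/Tonelli for the convolution tail
  set fe : ℝ → ENNReal := fun s => ENNReal.ofReal (f s) with hfe_def
  have hfe_meas : Measurable fe := ENNReal.measurable_ofReal.comp hfmeas
  -- slice equality
  have hslice_eq : ∀ y : ℝ, 0 < y →
      (∫⁻ s, fe s * fe (y - s)) = ENNReal.ofReal (∫ s in Ioo (0:ℝ) y, h s * h (y - s)) := by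
    intro y hy
    have step1 : (fun s => fe s * fe (y - s))
        = (Ioo (0:ℝ) y).indicator (fun s => fe s * fe (y - s)) := by
      funext s
      by_cases hs : s ∈ Ioo (0:ℝ) y
      · rw [indicator_of_mem hs]
      · rw [indicator_of_notMem hs]
        rw [mem_Ioo, not_and_or] at hs
        rcases hs with h1 | h2
        · push_neg at h1
          simp only [hfe_def]
          rw [hf_eq0 s h1, ENNReal.ofReal_zero, zero_mul]
        · push_neg at h2
          simp only [hfe_def]
          rw [hf_eq0 (y - s) (by linarith), ENNReal.ofReal_zero, mul_zero]
    rw [step1, lintegral_indicator measurableSet_Ioo]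
    have step2 : ∫⁻ s in Ioo (0:ℝ) y, fe s * fe (y - s)
        = ∫⁻ s in Ioo (0:ℝ) y, ENNReal.ofReal (h s * h (y - s)) := by
      apply setLIntegral_congr_fun measurableSet_Ioo
      intro s hs
      simp only [hfe_def]
      rw [hf_eq s hs.1, hf_eq (y - s) (by linarith [hs.2]),
        ENNReal.ofReal_mul (hnonneg s hs.1)]
    rw [step2]
    rw [← ofReal_integral_eq_lintegral_ofReal (hslice y hy)]
    apply (ae_restrict_iff' measurableSet_Ioo).2
    apply Eventually.of_forall
    intro s hs
    exact mul_nonneg (hnonneg s hs.1) (hnonneg (y - s) (by simp; linarith [hs.2]))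
  -- left-hand side of Tonelli
  have hconv_nonneg : ∀ y : ℝ, 0 < y → 0 ≤ ∫ s in Ioo (0:ℝ) y, h s * h (y - s) := by
    intro y hy
    apply setIntegral_nonneg measurableSet_Ioo
    intro s hs
    exact mul_nonneg (hnonneg s hs.1) (hnonneg (y - s) (by simp; linarith [hs.2]))
  have hLHS : (∫⁻ y in Ioi x, ∫⁻ s, fe s * fe (y - s))
      = ENNReal.ofReal (∫ y in Ioi x, ∫ s in Ioo (0:ℝ) y, h s * h (y - s)) := by
    rw [setLIntegral_congr_fun measurableSet_Ioi
      (fun y hy => hslice_eq y (lt_trans hx0 hy))]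
    rw [← ofReal_integral_eq_lintegral_ofReal Iconv]
    apply (ae_restrict_iff' measurableSet_Ioi).2
    exact Eventually.of_forall (fun y hy => hconv_nonneg y (lt_trans hx0 hy))
  -- Tonelli swap
  have hswap : (∫⁻ y in Ioi x, ∫⁻ s, fe s * fe (y - s))
      = ∫⁻ s, ∫⁻ y in Ioi x, fe s * fe (y - s) := by
    apply lintegral_lintegral_swap
    apply Measurable.aemeasurable
    exact ((hfe_meas.comp measurable_snd).mul
      (hfe_meas.comp (measurable_fst.sub measurable_snd)))
  -- translation of the inner integral
  have htrans : ∀ s : ℝ, (∫⁻ y in Ioi x, fe (y - s)) = ∫⁻ u in Ioi (x - s), fe u := by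
    intro s
    rw [← lintegral_indicator measurableSet_Ioi, ← lintegral_indicator measurableSet_Ioi]
    rw [← lintegral_add_right_eq_self
      (fun y => (Ioi x).indicator (fun y => fe (y - s)) y) s]
    congr 1
    funext u
    by_cases hu : u ∈ Ioi (x - s)
    · have hus : u + s ∈ Ioi x := by simp only [mem_Ioi] at hu ⊢; linarith
      rw [indicator_of_mem hus, indicator_of_mem hu, add_sub_cancel_right]
    · have hus : u + s ∉ Ioi x := by simp only [mem_Ioi] at hu ⊢; linarith
      rw [indicator_of_notMem hus, indicator_of_notMem hu]
  -- tail lintegral of fe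
  have hGe : ∀ t : ℝ, (∫⁻ u in Ioi t, fe u) = ENNReal.ofReal (Gr t) := by
    intro t
    simp only [hGr_def]
    rw [← ofReal_integral_eq_lintegral_ofReal hf_int.integrableOn
      (Eventually.of_forall (fun u => hf_nonneg u))]
  -- global integrability of f * Gr(x - .)
  have hFG_int : Integrable (fun s => f s * Gr (x - s)) := by
    apply Integrable.mono' (hf_int.const_mul M)
    · exact (hfmeas.mul (hGr_meas.comp (measurable_const.sub measurable_id))).aestronglyMeasurable
    · apply Eventually.of_forall
      intro s
      rw [Real.norm_eq_abs, abs_of_nonneg (mul_nonneg (hf_nonneg s) (hGr_nonneg (x - s)))]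
      calc f s * Gr (x - s) ≤ f s * M := mul_le_mul_of_nonneg_left (hGr_le _) (hf_nonneg s)
      _ = M * f s := mul_comm _ _
  -- right-hand side of Tonelli
  have hRHS : (∫⁻ s, ∫⁻ y in Ioi x, fe s * fe (y - s))
      = ENNReal.ofReal (∫ s, f s * Gr (x - s)) := by
    have step1 : ∀ s : ℝ, (∫⁻ y in Ioi x, fe s * fe (y - s))
        = ENNReal.ofReal (f s * Gr (x - s)) := by
      intro s
      have hm : Measurable (fun u : ℝ => fe (u - s)) :=
        hfe_meas.comp (measurable_id.sub measurable_const)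
      rw [lintegral_const_mul (fe s) hm, htrans s, hGe (x - s)]
      simp only [hfe_def]
      rw [← ENNReal.ofReal_mul (hf_nonneg s)]
    rw [lintegral_congr step1]
    rw [← ofReal_integral_eq_lintegral_ofReal hFG_int]
    exact Eventually.of_forall (fun s => mul_nonneg (hf_nonneg s) (hGr_nonneg (x - s)))
  -- computing the Bochner integral on the right-hand side
  have hIoo_int : IntegrableOn (fun s => h s * H (x - s)) (Ioo (0:ℝ) x) := by
    apply Integrable.mono' ((hint.mono_set (fun t ht => ht.1)).const_mul M)
    · have : ContinuousOn (fun s => h s * H (x - s)) (Ioo 0 x) := by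
        apply ContinuousOn.mul (hcontOn.mono (fun t ht => ht.1))
        apply hHcont.comp ((continuous_const.sub continuous_id).continuousOn)
        intro t ht
        simp only [mem_Ioi, id_eq, Pi.sub_apply]
        linarith [ht.2]
      exact this.aestronglyMeasurable measurableSet_Ioo
    · apply (ae_restrict_iff' measurableSet_Ioo).2
      apply Eventually.of_forall
      intro s hs
      have h1 : 0 ≤ h s := hnonneg s hs.1
      have h2 : 0 ≤ H (x - s) := hHnonneg _ (by linarith [hs.2])
      rw [Real.norm_eq_abs, abs_of_nonneg (mul_nonneg h1 h2)]
      calc h s * H (x - s) ≤ h s * M := mul_le_mul_of_nonneg_left (hHle _ (by linarith [hs.2])) h1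
      _ = M * h s := mul_comm _ _
  have hBochner : (∫ s, f s * Gr (x - s))
      = (∫ s in Ioo (0:ℝ) x, h s * H (x - s)) + H x * M := by
    have e1 : (fun s => f s * Gr (x - s))
        = (Ioi (0:ℝ)).indicator (fun s => h s * Gr (x - s)) := by
      funext s
      by_cases hs : s ∈ Ioi (0:ℝ)
      · rw [indicator_of_mem hs, hf_eq s hs]
      · rw [indicator_of_notMem hs, hf_eq0 s (by simpa using hs), zero_mul]
    rw [e1, integral_indicator measurableSet_Ioi]
    have hIoi0_int : IntegrableOn (fun s => h s * Gr (x - s)) (Ioi (0:ℝ)) := by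
      apply (hFG_int.integrableOn).congr_fun _ measurableSet_Ioi
      intro s hs
      simp only
      rw [hf_eq s hs]
    have hunion : Ioo (0:ℝ) x ∪ Ici x = Ioi (0:ℝ) := Ioo_union_Ici_eq_Ioi hx0
    have hdisj : Disjoint (Ioo (0:ℝ) x) (Ici x) :=
      disjoint_left.2 fun s hs hs' => absurd hs' (not_le.2 hs.2)
    rw [← hunion, setIntegral_union hdisj measurableSet_Ici
      (hIoi0_int.mono_set (fun t ht => ht.1))
      (hIoi0_int.mono_set (fun t ht => lt_of_lt_of_le hx0 ht))]
    congr 1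
    · apply setIntegral_congr_fun measurableSet_Ioo
      intro s hs
      simp only
      rw [hGr_eqH (x - s) (by linarith [hs.2])]
    · have e2 : ∫ s in Ici x, h s * Gr (x - s) = ∫ s in Ici x, h s * M := by
        apply setIntegral_congr_fun measurableSet_Ici
        intro s hs
        simp only
        rw [hGr_eqM (x - s) (by simp only [mem_Ici] at hs; linarith)]
      rw [e2, integral_mul_const, integral_Ici_eq_integral_Ioi, ← hH x]
  -- Step D conclusion
  have hD : (∫ y in Ioi x, ∫ s in Ioo (0:ℝ) y, h s * h (y - s))
      = (∫ s in Ioo (0:ℝ) x, h s * H (x - s)) + H x * M := by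
    have e := hLHS
    rw [hswap, hRHS, hBochner] at e
    have n1 : 0 ≤ ∫ y in Ioi x, ∫ s in Ioo (0:ℝ) y, h s * h (y - s) :=
      setIntegral_nonneg measurableSet_Ioi (fun y hy => hconv_nonneg y (lt_trans hx0 hy))
    have n2 : 0 ≤ (∫ s in Ioo (0:ℝ) x, h s * H (x - s)) + H x * M := by
      apply add_nonneg
      · apply setIntegral_nonneg measurableSet_Ioo
        intro s hs
        exact mul_nonneg (hnonneg s hs.1) (hHnonneg _ (by linarith [hs.2]))
      · exact mul_nonneg (hHnonneg x hx0.le) (le_trans (hHnonneg x hx0.le) (hHle x hx0.le))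
    exact (ENNReal.ofReal_eq_ofReal_iff n1 n2).1 e.symm
  -- final assembly
  have hzero : ∫ y in Ioi x,
      (w * y ^ (1 + α) * h' y + w * (α + 2) * y ^ α * h y
        + (∫ s in Ioo (0:ℝ) y, h s * h (y - s)) - 2 * M * h y) = 0 := by
    rw [setIntegral_congr_fun measurableSet_Ioi
      (fun y (hy : y ∈ Ioi x) => heq y (hIsub hy)), integral_zero]
  have hfun : (fun y => w * y ^ (1 + α) * h' y + w * (α + 2) * y ^ α * h y
        + (∫ s in Ioo (0:ℝ) y, h s * h (y - s)) - 2 * M * h y)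
      = (fun y => (w * ((1+α) * (y ^ α * h y) + y ^ (1+α) * h' y)
        + w * (y ^ α * h y) + (∫ s in Ioo (0:ℝ) y, h s * h (y - s)))
        + (-(2 * M)) * h y) := by
    funext y
    ring
  rw [hfun] at hzero
  have IB : IntegrableOn (fun y => (1+α) * (y ^ α * h y) + y ^ (1+α) * h' y) (Ioi x) :=
    (I2.const_mul _).add I1
  have A1 : IntegrableOn (fun y => w * ((1+α) * (y ^ α * h y) + y ^ (1+α) * h' y)) (Ioi x) :=
    IB.const_mul w
  have A2 : IntegrableOn (fun y => w * (y ^ α * h y)) (Ioi x) := I2.const_mul w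
  have A12 : IntegrableOn (fun y => w * ((1+α) * (y ^ α * h y) + y ^ (1+α) * h' y)
      + w * (y ^ α * h y)) (Ioi x) := A1.add A2
  have A123 : IntegrableOn (fun y => w * ((1+α) * (y ^ α * h y) + y ^ (1+α) * h' y)
      + w * (y ^ α * h y) + (∫ s in Ioo (0:ℝ) y, h s * h (y - s))) (Ioi x) := A12.add Iconv
  have A4 : IntegrableOn (fun y => (-(2 * M)) * h y) (Ioi x) := Ih.const_mul _
  rw [integral_add A123 A4, integral_add A12 Iconv, integral_add A1 A2,
    integral_const_mul, integral_const_mul, integral_const_mul] at hzero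
  rw [hB, hD, ← hH x] at hzero
  rw [integral_const_mul] at IC_eq
  have e2 : w * (α * (∫ y in Ioi x, y ^ (α-1) * H y)) = w * (J - x ^ α * H x) := by
    rw [IC_eq]
  have hJx : J = ∫ y in Ioi x, y ^ α * h y := hJ_def
  linear_combination hzero + e2
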